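/- arXiv:1412.6579 — 7 statements merged into one kernel-verified Lean document; each statement's English description precedes it below -/
import Mathlib

section
/- For any While statement s, state σ, and traces τ and τ', if (s,σ) ⇒ τ and τ ≈ τ', then (s,σ) ⇒ τ'. -/
namespace WhileTrace

/-- Program variables. -/
abbrev Var := ℕ
/-- States assign integer values to variables. -/
abbrev State := Var → ℤ
/-- Arithmetic expressions, modelled by their integer value in each state. -/
abbrev Expr := State → ℤ

/-- State update `σ[x ↦ v]`. -/
def update (σ : State) (x : Var) (v : ℤ) : State := Function.update σ x v

/-- Reading an expression as a boolean: `σ ⊨ e`. -/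
def istrue (e : Expr) (σ : State) : Prop := e σ ≠ 0

/-- Traces: nonempty, possibly infinite sequences of states
(a head state together with a possibly infinite sequence of further states). -/
def Trace : Type := State × Stream'.Seq State

/-- The singleton trace `⟨σ⟩`. -/
def Trace.single (σ : State) : Trace := (σ, Stream'.Seq.nil)

/-- The cons trace `σ :: τ`. -/
def Trace.cons (σ : State) (τ : Trace) : Trace := (σ, Stream'.Seq.cons τ.1 τ.2)

/-- The first state of a trace. -/
def Trace.hd (τ : Trace) : State := τ.1

/-- Bisimilarity of traces `τ ≈ τ'`, as a greatest fixed point: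
there is a relation `R` relating the two traces that is consistent with the
coinductive rules `⟨σ⟩ ≈ ⟨σ⟩` and `σ::τ ≈ σ::τ'` whenever `τ ≈ τ'`. -/
def Bisim (τ τ' : Trace) : Prop :=
  ∃ R : Trace → Trace → Prop, R τ τ' ∧
    ∀ a b, R a b →
      (∃ σ, a = Trace.single σ ∧ b = Trace.single σ) ∨
      (∃ σ a' b', a = Trace.cons σ a' ∧ b = Trace.cons σ b' ∧ R a' b')

/-- Finiteness `τ ↓ σ` : `τ` is finite with last state `σ` (inductive). -/
inductive Converges : Trace → State → Prop
  | single (σ : State) : Converges (Trace.single σ) σ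
  | cons (σ' : State) {τ : Trace} {σ : State} :
      Converges τ σ → Converges (Trace.cons σ' τ) σ

/-- Infiniteness of a trace (coinductive, as a greatest fixed point). -/
def InfiniteT (τ : Trace) : Prop :=
  ∃ P : Trace → Prop, P τ ∧ ∀ a, P a → ∃ σ a', a = Trace.cons σ a' ∧ P a'

/-- Statements of the While language. -/
inductive Stmt : Type
  | assign (x : Var) (e : Expr)
  | skip
  | seq (s₀ s₁ : Stmt)
  | ifte (e : Expr) (st sf : Stmt)
  | whileDo (e : Expr) (st : Stmt)

/-- A pair of relations `(E, ES)` is consistent with the rules of evaluation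
and extended evaluation: every claimed evaluation is backed by one of the
coinductive rules, with premises again in `(E, ES)`. -/
def EvalConsistent (E : Stmt → State → Trace → Prop)
    (ES : Stmt → Trace → Trace → Prop) : Prop :=
  (∀ x e σ τ, E (.assign x e) σ τ →
      τ = Trace.cons σ (Trace.single (update σ x (e σ)))) ∧
  (∀ σ τ, E .skip σ τ → τ = Trace.single σ) ∧
  (∀ s₀ s₁ σ τ', E (.seq s₀ s₁) σ τ' → ∃ τ, E s₀ σ τ ∧ ES s₁ τ τ') ∧
  (∀ e st sf σ τ, E (.ifte e st sf) σ τ →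
      (istrue e σ ∧ ES st (Trace.cons σ (Trace.single σ)) τ) ∨
      (¬ istrue e σ ∧ ES sf (Trace.cons σ (Trace.single σ)) τ)) ∧
  (∀ e st σ τ', E (.whileDo e st) σ τ' →
      (istrue e σ ∧ ∃ τ, ES st (Trace.cons σ (Trace.single σ)) τ ∧
        ES (.whileDo e st) τ τ') ∨
      (¬ istrue e σ ∧ τ' = Trace.cons σ (Trace.single σ))) ∧
  (∀ s τ τ', ES s τ τ' →
      (∃ σ, τ = Trace.single σ ∧ E s σ τ') ∨
      (∃ σ τ₀ τ₀', τ = Trace.cons σ τ₀ ∧ τ' = Trace.cons σ τ₀' ∧ ES s τ₀ τ₀'))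

/-- Evaluation `(s,σ) ⇒ τ` : greatest fixed point of the mutual coinductive rules. -/
def Exec (s : Stmt) (σ : State) (τ : Trace) : Prop :=
  ∃ E ES, EvalConsistent E ES ∧ E s σ τ

/-- Extended evaluation `(s,τ) ⇒* τ'`. -/
def ExecSeq (s : Stmt) (τ τ' : Trace) : Prop :=
  ∃ E ES, EvalConsistent E ES ∧ ES s τ τ'

/-- The standard inductive state-based big-step semantics `(s,σ) ⇓ σ'`. -/
inductive BigStep : Stmt → State → State → Prop
  | assign (x : Var) (e : Expr) (σ : State) :
      BigStep (.assign x e) σ (update σ x (e σ))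
  | skip (σ : State) : BigStep .skip σ σ
  | seq {s₀ s₁ : Stmt} {σ σ' σ'' : State} :
      BigStep s₀ σ σ' → BigStep s₁ σ' σ'' → BigStep (.seq s₀ s₁) σ σ''
  | ifTrue {e : Expr} {st sf : Stmt} {σ σ' : State} :
      istrue e σ → BigStep st σ σ' → BigStep (.ifte e st sf) σ σ'
  | ifFalse {e : Expr} {st sf : Stmt} {σ σ' : State} :
      ¬ istrue e σ → BigStep sf σ σ' → BigStep (.ifte e st sf) σ σ'
  | whileTrue {e : Expr} {st : Stmt} {σ σ' σ'' : State} :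
      istrue e σ → BigStep st σ σ' → BigStep (.whileDo e st) σ' σ'' →
      BigStep (.whileDo e st) σ σ''
  | whileFalse {e : Expr} {st : Stmt} {σ : State} :
      ¬ istrue e σ → BigStep (.whileDo e st) σ σ

/-- State predicates. -/
abbrev StatePred := State → Prop
/-- Trace predicates. -/
abbrev TracePred := Trace → Prop

/-- A setoid trace predicate respects bisimilarity. -/
def IsSetoidPred (P : TracePred) : Prop := ∀ τ τ', P τ → Bisim τ τ' → P τ'

/-- The singleton predicate `[U]`. -/
def Sglt (U : StatePred) : TracePred :=
  fun τ => ∃ σ, U σ ∧ τ = Trace.single σ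

/-- The doubleton predicate `⟨U⟩`. -/
def Dup (U : StatePred) : TracePred :=
  fun τ => ∃ σ, U σ ∧ τ = Trace.cons σ (Trace.single σ)

/-- The update predicate `U[x ↦ e]`. -/
def UpdPred (U : StatePred) (x : Var) (e : Expr) : TracePred :=
  fun τ => ∃ σ, U σ ∧ τ = Trace.cons σ (Trace.single (update σ x (e σ)))

/-- `Q follows τ in τ'` (coinductive, as a greatest fixed point). -/
def Follows (Q : TracePred) (τ τ' : Trace) : Prop :=
  ∃ R : Trace → Trace → Prop, R τ τ' ∧
    ∀ a b, R a b →
      (∃ σ, a = Trace.single σ ∧ b.hd = σ ∧ Q b) ∨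
      (∃ σ a' b', a = Trace.cons σ a' ∧ b = Trace.cons σ b' ∧ R a' b')

/-- The chop `P ** Q`. -/
def Chop (P Q : TracePred) : TracePred :=
  fun τ' => ∃ τ, P τ ∧ Follows Q τ τ'

/-- The iteration `P*` (coinductive, as a greatest fixed point). -/
def Iter (P : TracePred) : TracePred := fun τ =>
  ∃ X : TracePred, X τ ∧
    ∀ a, X a → Sglt (fun _ => True) a ∨ ∃ τ₀, P τ₀ ∧ Follows X τ₀ a

/-- `Last P` : states that are the last state of some finite trace satisfying `P`. -/
def Last (P : TracePred) : StatePred := fun σ => ∃ τ, P τ ∧ Converges τ σ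

/-- The trace predicate `finite`. -/
def FiniteT : TracePred := fun τ => ∃ σ, Converges τ σ

/-- Derivability `⊢ {U} s {P}` in the trace-based Hoare logic. -/
inductive THoare : StatePred → Stmt → TracePred → Prop
  | assign (U : StatePred) (x : Var) (e : Expr) :
      THoare U (.assign x e) (UpdPred U x e)
  | skip (U : StatePred) : THoare U .skip (Sglt U)
  | seq {U V : StatePred} {s₀ s₁ : Stmt} {P Q : TracePred} :
      THoare U s₀ (Chop P (Sglt V)) → THoare V s₁ Q →
      THoare U (.seq s₀ s₁) (Chop P Q)
  | ifte {U : StatePred} {e : Expr} {st sf : Stmt} {P : TracePred} :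
      THoare (fun σ => istrue e σ ∧ U σ) st P →
      THoare (fun σ => ¬ istrue e σ ∧ U σ) sf P →
      THoare U (.ifte e st sf) (Chop (Dup U) P)
  | whileDo {U I : StatePred} {e : Expr} {st : Stmt} {P : TracePred} :
      (∀ σ, U σ → I σ) →
      THoare (fun σ => istrue e σ ∧ I σ) st (Chop P (Sglt I)) →
      THoare U (.whileDo e st)
        (Chop (Dup U)
          (Chop (Iter (Chop P (Dup I))) (Sglt (fun σ => ¬ istrue e σ))))
  | conseq {U U' : StatePred} {s : Stmt} {P P' : TracePred} :
      (∀ σ, U σ → U' σ) → THoare U' s P' → (∀ τ, P' τ → P τ) →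
      THoare U s P
  | exist {Z : Type} {U : Z → StatePred} {s : Stmt} {P : Z → TracePred} :
      (∀ z, THoare (U z) s (P z)) →
      THoare (fun σ => ∃ z, U z σ) s (fun τ => ∃ z, P z τ)

/-- Derivability `⊢p {U} s {Z}` in the state-based partial-correctness Hoare logic. -/
inductive PHoare : StatePred → Stmt → StatePred → Prop
  | assign (Z : StatePred) (x : Var) (e : Expr) :
      PHoare (fun σ => Z (update σ x (e σ))) (.assign x e) Z
  | skip (U : StatePred) : PHoare U .skip U
  | seq {U V Z : StatePred} {s₀ s₁ : Stmt} :
      PHoare U s₀ V → PHoare V s₁ Z → PHoare U (.seq s₀ s₁) Z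
  | ifte {U Z : StatePred} {e : Expr} {st sf : Stmt} :
      PHoare (fun σ => istrue e σ ∧ U σ) st Z →
      PHoare (fun σ => ¬ istrue e σ ∧ U σ) sf Z →
      PHoare U (.ifte e st sf) Z
  | whileDo {I : StatePred} {e : Expr} {st : Stmt} :
      PHoare (fun σ => istrue e σ ∧ I σ) st I →
      PHoare I (.whileDo e st) (fun σ => I σ ∧ ¬ istrue e σ)
  | exist {Z : Type} {U V : Z → StatePred} {s : Stmt} :
      (∀ z, PHoare (U z) s (V z)) →
      PHoare (fun σ => ∃ z, U z σ) s (fun σ => ∃ z, V z σ)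
  | conseq {U U' Z Z' : StatePred} {s : Stmt} :
      (∀ σ, U σ → U' σ) → PHoare U' s Z' → (∀ σ, Z' σ → Z σ) →
      PHoare U s Z

/-- Derivability `⊢t {U} s {Z}` in the state-based total-correctness Hoare
logic, with the `while-fun` rule. -/
inductive TotHoare : StatePred → Stmt → StatePred → Prop
  | assign (Z : StatePred) (x : Var) (e : Expr) :
      TotHoare (fun σ => Z (update σ x (e σ))) (.assign x e) Z
  | skip (U : StatePred) : TotHoare U .skip U
  | seq {U V Z : StatePred} {s₀ s₁ : Stmt} :
      TotHoare U s₀ V → TotHoare V s₁ Z → TotHoare U (.seq s₀ s₁) Z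
  | ifte {U Z : StatePred} {e : Expr} {st sf : Stmt} :
      TotHoare (fun σ => istrue e σ ∧ U σ) st Z →
      TotHoare (fun σ => ¬ istrue e σ ∧ U σ) sf Z →
      TotHoare U (.ifte e st sf) Z
  | whileFun {I : StatePred} {e : Expr} {st : Stmt} (t : State → ℕ) (m : ℕ) :
      (∀ n : ℕ, TotHoare (fun σ => istrue e σ ∧ I σ ∧ t σ = n) st
        (fun σ => I σ ∧ t σ < n)) →
      TotHoare (fun σ => I σ ∧ t σ = m) (.whileDo e st)
        (fun σ => I σ ∧ t σ ≤ m ∧ ¬ istrue e σ)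
  | exist {Z : Type} {U V : Z → StatePred} {s : Stmt} :
      (∀ z, TotHoare (U z) s (V z)) →
      TotHoare (fun σ => ∃ z, U z σ) s (fun σ => ∃ z, V z σ)
  | conseq {U U' Z Z' : StatePred} {s : Stmt} :
      (∀ σ, U σ → U' σ) → TotHoare U' s Z' → (∀ σ, Z' σ → Z σ) →
      TotHoare U s Z

theorem Bisim.eq {τ τ' : Trace} (hb : Bisim τ τ') : τ = τ' := by
  obtain ⟨R, hR, hstep⟩ := hb
  have hhd : ∀ a b : Trace, R a b → a.1 = b.1 := by
    intro a b hab
    rcases hstep a b hab with ⟨σ₀, rfl, rfl⟩ | ⟨σ₀, a', b', rfl, rfl, _⟩ <;> rfl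
  have htl : τ.2 = τ'.2 := by
    apply Stream'.Seq.eq_of_bisim
      (R := fun s t => s = t ∨ ∃ σa σb : State, R (σa, s) (σb, t))
    · intro s t hst
      rcases hst with rfl | ⟨σa, σb, hab⟩
      · rcases h : Stream'.Seq.destruct s with _ | ⟨x, s'⟩ <;> simp
      · rcases hstep _ _ hab with ⟨σ₀, ha, hb⟩ | ⟨σ₀, a', b', ha, hb, hab'⟩
        · have hs : s = Stream'.Seq.nil := congrArg Prod.snd ha
          have ht : t = Stream'.Seq.nil := congrArg Prod.snd hb
          subst hs; subst ht; simp [Stream'.Seq.destruct_nil]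
        · have hs : s = Stream'.Seq.cons a'.1 a'.2 := congrArg Prod.snd ha
          have ht : t = Stream'.Seq.cons b'.1 b'.2 := congrArg Prod.snd hb
          subst hs; subst ht
          simp only [Stream'.Seq.destruct_cons, Stream'.Seq.BisimO]
          exact ⟨hhd _ _ hab', Or.inr ⟨a'.1, b'.1, by
            exact hab'⟩⟩
    · exact Or.inr ⟨τ.1, τ'.1, by exact hR⟩
  exact Prod.ext (hhd _ _ hR) htl

/-- If `(s,σ) ⇒ τ` and `τ ≈ τ'`, then `(s,σ) ⇒ τ'`. -/
theorem exec_bisim (s : Stmt) (σ : State) (τ τ' : Trace)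
    (h : Exec s σ τ) (hb : Bisim τ τ') : Exec s σ τ' := hb.eq ▸ h

end WhileTrace
end

section
/- Evaluation is deterministic up to bisimilarity: for any While statement s, state σ, and traces τ and τ', if (s,σ) ⇒ τ and (s,σ) ⇒ τ', then τ ≈ τ'. -/
namespace WhileTrace

/- ### Auxiliary material for determinism -/

lemma single_ne_cons {σ σ' : State} {τ : Trace} :
    Trace.single σ ≠ Trace.cons σ' τ := by
  intro h
  have h2 := congrArg Prod.snd h
  simp only [Trace.single, Trace.cons] at h2
  have := congrArg Stream'.Seq.head h2
  simp [Stream'.Seq.head_nil, Stream'.Seq.head_cons] at this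

lemma single_inj {σ σ' : State} (h : Trace.single σ = Trace.single σ') : σ = σ' :=
  congrArg Prod.fst h

lemma cons_inj {σ σ' : State} {τ τ' : Trace}
    (h : Trace.cons σ τ = Trace.cons σ' τ') : σ = σ' ∧ τ = τ' := by
  have h1 := congrArg Prod.fst h
  have h2 := congrArg Prod.snd h
  simp only [Trace.cons] at h1 h2
  refine ⟨h1, ?_⟩
  have hh := congrArg Stream'.Seq.head h2
  have ht := congrArg Stream'.Seq.tail h2
  simp [Stream'.Seq.head_cons] at hh
  simp [Stream'.Seq.tail_cons] at ht
  exact Prod.ext hh ht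

lemma bisim_single (σ : State) : Bisim (Trace.single σ) (Trace.single σ) := by
  refine ⟨fun a b => a = Trace.single σ ∧ b = Trace.single σ, ⟨rfl, rfl⟩, ?_⟩
  rintro a b ⟨rfl, rfl⟩
  exact Or.inl ⟨σ, rfl, rfl⟩

/-- `(Exec, ExecSeq)` is itself a consistent pair. -/
lemma evalConsistent_exec : EvalConsistent Exec ExecSeq := by
  refine ⟨?_, ?_, ?_, ?_, ?_, ?_⟩
  · rintro x e σ τ ⟨E, ES, hC, hE⟩
    exact hC.1 x e σ τ hE
  · rintro σ τ ⟨E, ES, hC, hE⟩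
    exact hC.2.1 σ τ hE
  · rintro s₀ s₁ σ τ' ⟨E, ES, hC, hE⟩
    obtain ⟨τ, h1, h2⟩ := hC.2.2.1 s₀ s₁ σ τ' hE
    exact ⟨τ, ⟨E, ES, hC, h1⟩, ⟨E, ES, hC, h2⟩⟩
  · rintro e st sf σ τ ⟨E, ES, hC, hE⟩
    rcases hC.2.2.2.1 e st sf σ τ hE with ⟨ht, h⟩ | ⟨ht, h⟩
    · exact Or.inl ⟨ht, E, ES, hC, h⟩
    · exact Or.inr ⟨ht, E, ES, hC, h⟩
  · rintro e st σ τ' ⟨E, ES, hC, hE⟩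
    rcases hC.2.2.2.2.1 e st σ τ' hE with ⟨ht, τ, h1, h2⟩ | ⟨ht, h⟩
    · exact Or.inl ⟨ht, τ, ⟨E, ES, hC, h1⟩, ⟨E, ES, hC, h2⟩⟩
    · exact Or.inr ⟨ht, h⟩
  · rintro s τ τ' ⟨E, ES, hC, hE⟩
    rcases hC.2.2.2.2.2 s τ τ' hE with ⟨σ, h1, h2⟩ | ⟨σ, τ₀, τ₀', h1, h2, h3⟩
    · exact Or.inl ⟨σ, h1, E, ES, hC, h2⟩
    · exact Or.inr ⟨σ, τ₀, τ₀', h1, h2, E, ES, hC, h3⟩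

/-- The rule `(s,σ) ⇒ τ → (s,⟨σ⟩) ⇒* τ` holds for the greatest fixed point. -/
lemma execSeq_of_exec {s : Stmt} {σ : State} {τ : Trace} (h : Exec s σ τ) :
    ExecSeq s (Trace.single σ) τ := by
  classical
  refine ⟨Exec, fun s t t' => ExecSeq s t t' ∨ ∃ σ, t = Trace.single σ ∧ Exec s σ t',
    ?_, Or.inr ⟨σ, rfl, h⟩⟩
  obtain ⟨c1, c2, c3, c4, c5, c6⟩ := evalConsistent_exec
  refine ⟨c1, c2, ?_, ?_, ?_, ?_⟩
  · intro s₀ s₁ σ τ' hE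
    obtain ⟨τ, h1, h2⟩ := c3 s₀ s₁ σ τ' hE
    exact ⟨τ, h1, Or.inl h2⟩
  · intro e st sf σ τ hE
    rcases c4 e st sf σ τ hE with ⟨ht, h⟩ | ⟨ht, h⟩
    · exact Or.inl ⟨ht, Or.inl h⟩
    · exact Or.inr ⟨ht, Or.inl h⟩
  · intro e st σ τ' hE
    rcases c5 e st σ τ' hE with ⟨ht, τ, h1, h2⟩ | ⟨ht, h⟩
    · exact Or.inl ⟨ht, τ, Or.inl h1, Or.inl h2⟩
    · exact Or.inr ⟨ht, h⟩
  · intro s τ τ' hES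
    rcases hES with hES | ⟨σ, h1, h2⟩
    · rcases c6 s τ τ' hES with ⟨σ, h1, h2⟩ | ⟨σ, τ₀, τ₀', h1, h2, h3⟩
      · exact Or.inl ⟨σ, h1, h2⟩
      · exact Or.inr ⟨σ, τ₀, τ₀', h1, h2, Or.inl h3⟩
    · exact Or.inl ⟨σ, h1, h2⟩

/-- Inductive closure of bisimilarity under extended evaluation from related traces. -/
inductive ERel : Trace → Trace → Prop
  | base {a b : Trace} : Bisim a b → ERel a b
  | step {s : Stmt} {t t' a b : Trace} :
      ERel t t' → ExecSeq s t a → ExecSeq s t' b → ERel a b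

/-- One unfolding step of bisimilarity relative to `ERel`. -/
def EStep (a b : Trace) : Prop :=
  (∃ σ, a = Trace.single σ ∧ b = Trace.single σ) ∨
  (∃ σ a' b', a = Trace.cons σ a' ∧ b = Trace.cons σ b' ∧ ERel a' b')

lemma estep_single (σ : State) : EStep (Trace.single σ) (Trace.single σ) :=
  Or.inl ⟨σ, rfl, rfl⟩

lemma estep_dup (σ : State) :
    EStep (Trace.cons σ (Trace.single σ)) (Trace.cons σ (Trace.single σ)) :=
  Or.inr ⟨σ, _, _, rfl, rfl, .base (bisim_single σ)⟩

/-- Main lemma: extended evaluation maps `EStep`-related traces to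
`EStep`-related traces; for the single case, evaluation from equal states
gives `EStep`-related traces. Induction on the statement. -/
lemma estep_execSeq : ∀ (s : Stmt) {t t' a b : Trace},
    EStep t t' → ExecSeq s t a → ExecSeq s t' b → EStep a b := by
  have dE := evalConsistent_exec
  intro s
  induction s with
  | assign x e =>
    intro t t' a b hst ha hb
    rcases dE.2.2.2.2.2 _ _ _ ha with ⟨σ, rfl, hEa⟩ | ⟨σ, t₀, a₀, rfl, rfl, ha₀⟩
    · rcases hst with ⟨σ, h1, h2⟩ | ⟨σ, t₁, t₁', h1, _, _⟩
      · cases single_inj h1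
        subst h2
        rcases dE.2.2.2.2.2 _ _ _ hb with ⟨σ₂, h3, hEb⟩ | ⟨σ₂, t₂, b₀, h3, _, _⟩
        swap
        · exact absurd h3 single_ne_cons
        cases single_inj h3
        have ea := dE.1 x e σ a hEa
        have eb := dE.1 x e σ b hEb
        subst ea; subst eb
        exact Or.inr ⟨σ, _, _, rfl, rfl, .base (bisim_single _)⟩
      · exact absurd h1 single_ne_cons
    · rcases hst with ⟨σ, h1, h2⟩ | ⟨σ, t₁, t₁', h1, h2, hR⟩
      · exact absurd h1.symm single_ne_cons
      · obtain ⟨rfl, rfl⟩ := cons_inj h1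
        subst h2
        rcases dE.2.2.2.2.2 _ _ _ hb with ⟨σ₂, h3, _⟩ | ⟨σ₂, t₂, b₀, h3, rfl, hb₀⟩
        · exact absurd h3.symm single_ne_cons
        obtain ⟨rfl, rfl⟩ := cons_inj h3
        exact Or.inr ⟨σ, _, _, rfl, rfl, .step hR ha₀ hb₀⟩
  | skip =>
    intro t t' a b hst ha hb
    rcases dE.2.2.2.2.2 _ _ _ ha with ⟨σ, rfl, hEa⟩ | ⟨σ, t₀, a₀, rfl, rfl, ha₀⟩
    · rcases hst with ⟨σ, h1, h2⟩ | ⟨σ, t₁, t₁', h1, _, _⟩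
      · cases single_inj h1
        subst h2
        rcases dE.2.2.2.2.2 _ _ _ hb with ⟨σ₂, h3, hEb⟩ | ⟨σ₂, t₂, b₀, h3, _, _⟩
        swap
        · exact absurd h3 single_ne_cons
        cases single_inj h3
        have ea := dE.2.1 σ a hEa
        have eb := dE.2.1 σ b hEb
        subst ea; subst eb
        exact estep_single _
      · exact absurd h1 single_ne_cons
    · rcases hst with ⟨σ, h1, h2⟩ | ⟨σ, t₁, t₁', h1, h2, hR⟩
      · exact absurd h1.symm single_ne_cons
      · obtain ⟨rfl, rfl⟩ := cons_inj h1
        subst h2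
        rcases dE.2.2.2.2.2 _ _ _ hb with ⟨σ₂, h3, _⟩ | ⟨σ₂, t₂, b₀, h3, rfl, hb₀⟩
        · exact absurd h3.symm single_ne_cons
        obtain ⟨rfl, rfl⟩ := cons_inj h3
        exact Or.inr ⟨σ, _, _, rfl, rfl, .step hR ha₀ hb₀⟩
  | seq s₀ s₁ ih₀ ih₁ =>
    intro t t' a b hst ha hb
    rcases dE.2.2.2.2.2 _ _ _ ha with ⟨σ, rfl, hEa⟩ | ⟨σ, t₀, a₀, rfl, rfl, ha₀⟩
    · rcases hst with ⟨σ, h1, h2⟩ | ⟨σ, t₁, t₁', h1, _, _⟩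
      · cases single_inj h1
        subst h2
        rcases dE.2.2.2.2.2 _ _ _ hb with ⟨σ₂, h3, hEb⟩ | ⟨σ₂, t₂, b₀, h3, _, _⟩
        swap
        · exact absurd h3 single_ne_cons
        cases single_inj h3
        obtain ⟨τ₁, hx1, hx2⟩ := dE.2.2.1 s₀ s₁ σ a hEa
        obtain ⟨τ₂, hy1, hy2⟩ := dE.2.2.1 s₀ s₁ σ b hEb
        have h12 : EStep τ₁ τ₂ :=
          ih₀ (estep_single σ) (execSeq_of_exec hx1) (execSeq_of_exec hy1)
        exact ih₁ h12 hx2 hy2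
      · exact absurd h1 single_ne_cons
    · rcases hst with ⟨σ, h1, h2⟩ | ⟨σ, t₁, t₁', h1, h2, hR⟩
      · exact absurd h1.symm single_ne_cons
      · obtain ⟨rfl, rfl⟩ := cons_inj h1
        subst h2
        rcases dE.2.2.2.2.2 _ _ _ hb with ⟨σ₂, h3, _⟩ | ⟨σ₂, t₂, b₀, h3, rfl, hb₀⟩
        · exact absurd h3.symm single_ne_cons
        obtain ⟨rfl, rfl⟩ := cons_inj h3
        exact Or.inr ⟨σ, _, _, rfl, rfl, .step hR ha₀ hb₀⟩
  | ifte e st sf iht ihf =>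
    intro t t' a b hst ha hb
    rcases dE.2.2.2.2.2 _ _ _ ha with ⟨σ, rfl, hEa⟩ | ⟨σ, t₀, a₀, rfl, rfl, ha₀⟩
    · rcases hst with ⟨σ, h1, h2⟩ | ⟨σ, t₁, t₁', h1, _, _⟩
      · cases single_inj h1
        subst h2
        rcases dE.2.2.2.2.2 _ _ _ hb with ⟨σ₂, h3, hEb⟩ | ⟨σ₂, t₂, b₀, h3, _, _⟩
        swap
        · exact absurd h3 single_ne_cons
        cases single_inj h3
        rcases dE.2.2.2.1 e st sf σ a hEa with ⟨ht, hx⟩ | ⟨ht, hx⟩ <;>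
          rcases dE.2.2.2.1 e st sf σ b hEb with ⟨ht', hy⟩ | ⟨ht', hy⟩
        · exact iht (estep_dup σ) hx hy
        · exact absurd ht ht'
        · exact absurd ht' ht
        · exact ihf (estep_dup σ) hx hy
      · exact absurd h1 single_ne_cons
    · rcases hst with ⟨σ, h1, h2⟩ | ⟨σ, t₁, t₁', h1, h2, hR⟩
      · exact absurd h1.symm single_ne_cons
      · obtain ⟨rfl, rfl⟩ := cons_inj h1
        subst h2
        rcases dE.2.2.2.2.2 _ _ _ hb with ⟨σ₂, h3, _⟩ | ⟨σ₂, t₂, b₀, h3, rfl, hb₀⟩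
        · exact absurd h3.symm single_ne_cons
        obtain ⟨rfl, rfl⟩ := cons_inj h3
        exact Or.inr ⟨σ, _, _, rfl, rfl, .step hR ha₀ hb₀⟩
  | whileDo e st ihst =>
    intro t t' a b hst ha hb
    rcases dE.2.2.2.2.2 _ _ _ ha with ⟨σ, rfl, hEa⟩ | ⟨σ, t₀, a₀, rfl, rfl, ha₀⟩
    · rcases hst with ⟨σ, h1, h2⟩ | ⟨σ, t₁, t₁', h1, _, _⟩
      · cases single_inj h1
        subst h2
        rcases dE.2.2.2.2.2 _ _ _ hb with ⟨σ₂, h3, hEb⟩ | ⟨σ₂, t₂, b₀, h3, _, _⟩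
        swap
        · exact absurd h3 single_ne_cons
        cases single_inj h3
        rcases dE.2.2.2.2.1 e st σ a hEa with ⟨ht, τ₁, hx1, hx2⟩ | ⟨ht, rfl⟩ <;>
          rcases dE.2.2.2.2.1 e st σ b hEb with ⟨ht', τ₂, hy1, hy2⟩ | ⟨ht', hb'⟩
        · -- both loop entered
          have h12 : EStep τ₁ τ₂ := ihst (estep_dup σ) hx1 hy1
          -- τ₁, τ₂ are conses since they extend a cons
          rcases dE.2.2.2.2.2 _ _ _ hx1 with ⟨σ₃, h4, _⟩ | ⟨σ₃, u₀, τ₁₀, h4, rfl, _⟩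
          · exact absurd h4.symm single_ne_cons
          rcases dE.2.2.2.2.2 _ _ _ hy1 with ⟨σ₄, h5, _⟩ | ⟨σ₄, v₀, τ₂₀, h5, rfl, _⟩
          · exact absurd h5.symm single_ne_cons
          rcases h12 with ⟨σ₅, h6, _⟩ | ⟨σ₅, w₁, w₂, h6, h7, hR⟩
          · exact absurd h6.symm single_ne_cons
          obtain ⟨rfl, rfl⟩ := cons_inj h6
          obtain ⟨h8, rfl⟩ := cons_inj h7
          subst h8
          -- destruct the extended evaluations of the while loop
          rcases dE.2.2.2.2.2 _ _ _ hx2 with ⟨σ₆, h9, _⟩ | ⟨σ₆, u, a₀, h9, rfl, ha₀⟩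
          · exact absurd h9.symm single_ne_cons
          obtain ⟨rfl, rfl⟩ := cons_inj h9
          rcases dE.2.2.2.2.2 _ _ _ hy2 with ⟨σ₇, h10, _⟩ | ⟨σ₇, v, b₀, h10, rfl, hb₀⟩
          · exact absurd h10.symm single_ne_cons
          obtain ⟨rfl, rfl⟩ := cons_inj h10
          exact Or.inr ⟨_, _, _, rfl, rfl, .step hR ha₀ hb₀⟩
        · exact absurd ht ht'
        · exact absurd ht' ht
        · subst hb'
          exact estep_dup σ
      · exact absurd h1 single_ne_cons
    · rcases hst with ⟨σ, h1, h2⟩ | ⟨σ, t₁, t₁', h1, h2, hR⟩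
      · exact absurd h1.symm single_ne_cons
      · obtain ⟨rfl, rfl⟩ := cons_inj h1
        subst h2
        rcases dE.2.2.2.2.2 _ _ _ hb with ⟨σ₂, h3, _⟩ | ⟨σ₂, t₂, b₀, h3, rfl, hb₀⟩
        · exact absurd h3.symm single_ne_cons
        obtain ⟨rfl, rfl⟩ := cons_inj h3
        exact Or.inr ⟨σ, _, _, rfl, rfl, .step hR ha₀ hb₀⟩

/-- `ERel` is a bisimulation. -/
lemma erel_estep : ∀ a b, ERel a b → EStep a b := by
  intro a b h
  induction h with
  | base h =>
    obtain ⟨S, hS, hcond⟩ := h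
    rcases hcond _ _ hS with ⟨σ, h1, h2⟩ | ⟨σ, a', b', h1, h2, h3⟩
    · exact Or.inl ⟨σ, h1, h2⟩
    · exact Or.inr ⟨σ, a', b', h1, h2, .base ⟨S, h3, hcond⟩⟩
  | @step s t t' a b _ ha hb ih =>
    exact estep_execSeq s ih ha hb

/-- Evaluation is deterministic up to bisimilarity. -/
theorem exec_deterministic (s : Stmt) (σ : State) (τ τ' : Trace)
    (h : Exec s σ τ) (h' : Exec s σ τ') : Bisim τ τ' := by
  refine ⟨ERel, ?_, erel_estep⟩
  exact .step (.base (bisim_single σ)) (execSeq_of_exec h) (execSeq_of_exec h')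

end WhileTrace
end

section
/- Evaluation is total: for any While statement s and state σ, there exists a trace τ such that (s,σ) ⇒ τ. -/
namespace WhileTrace

/-! ### Auxiliary interpreter for the totality proof -/

open Classical in
/-- One emitting step of a small-step interpreter with a continuation stack. -/
noncomputable def stepF : List Stmt × State → Option (State × (List Stmt × State))
  | ([], _) => none
  | (.skip :: k, σ) => stepF (k, σ)
  | (.assign x e :: k, σ) => some (update σ x (e σ), (k, update σ x (e σ)))
  | (.seq s₀ s₁ :: k, σ) => stepF (s₀ :: s₁ :: k, σ)
  | (.ifte e st sf :: k, σ) =>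
      if istrue e σ then some (σ, (st :: k, σ)) else some (σ, (sf :: k, σ))
  | (.whileDo e st :: k, σ) =>
      if istrue e σ then some (σ, (st :: .whileDo e st :: k, σ)) else some (σ, (k, σ))
  termination_by c => (c.1.map sizeOf).sum
  decreasing_by all_goals simp +arith +decide

/-- The trace generated by a configuration. -/
noncomputable def runT (c : List Stmt × State) : Trace :=
  (c.2, Stream'.Seq.corec stepF c)

theorem runT_hd (c : List Stmt × State) : (runT c).1 = c.2 := rfl

theorem stepF_hd : ∀ (c : List Stmt × State) (a : State) (c' : List Stmt × State),
    stepF c = some (a, c') → a = c'.2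
  | ([], _), a, c', h => by simp [stepF] at h
  | (.skip :: k, σ), a, c', h => stepF_hd (k, σ) a c' (by rwa [stepF] at h)
  | (.assign x e :: k, σ), a, c', h => by
      rw [stepF] at h; cases h; rfl
  | (.seq s₀ s₁ :: k, σ), a, c', h => stepF_hd (s₀ :: s₁ :: k, σ) a c' (by rwa [stepF] at h)
  | (.ifte e st sf :: k, σ), a, c', h => by
      rw [stepF] at h; split at h <;> (cases h; rfl)
  | (.whileDo e st :: k, σ), a, c', h => by
      rw [stepF] at h; split at h <;> (cases h; rfl)
  termination_by c => (c.1.map sizeOf).sum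
  decreasing_by all_goals simp +arith +decide

/-- `stepF` only looks at the front of the stack. -/
theorem stepF_append : ∀ (k : List Stmt) (σ : State) (k' : List Stmt),
    stepF (k ++ k', σ) =
      match stepF (k, σ) with
      | none => stepF (k', σ)
      | some (a, (k₂, σ₂)) => some (a, (k₂ ++ k', σ₂))
  | [], σ, k' => by rw [show stepF ([], σ) = none from by rw [stepF]]; rfl
  | .skip :: k, σ, k' => by
      rw [List.cons_append, stepF, stepF]; exact stepF_append k σ k'
  | .assign x e :: k, σ, k' => by rw [List.cons_append, stepF, stepF]
  | .seq s₀ s₁ :: k, σ, k' => by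
      rw [List.cons_append, stepF, stepF]
      have := stepF_append (s₀ :: s₁ :: k) σ k'
      simpa using this
  | .ifte e st sf :: k, σ, k' => by
      rw [List.cons_append, stepF, stepF]; split <;> rfl
  | .whileDo e st :: k, σ, k' => by
      rw [List.cons_append, stepF, stepF]; split <;> rfl
  termination_by k => (k.map sizeOf).sum
  decreasing_by all_goals simp +arith +decide

theorem corec_congr {c₁ c₂ : List Stmt × State} (h : stepF c₁ = stepF c₂) :
    Stream'.Seq.corec stepF c₁ = Stream'.Seq.corec stepF c₂ := by
  rcases h' : stepF c₂ with - | ⟨a, c⟩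
  · rw [Stream'.Seq.destruct_eq_none (s := Stream'.Seq.corec stepF c₁)
          (by rw [Stream'.Seq.corec_eq, h, h']; rfl),
        Stream'.Seq.destruct_eq_none (s := Stream'.Seq.corec stepF c₂)
          (by rw [Stream'.Seq.corec_eq, h']; rfl)]
  · rw [Stream'.Seq.destruct_eq_cons (by rw [Stream'.Seq.corec_eq, h, h']; rfl :
          Stream'.Seq.destruct (Stream'.Seq.corec stepF c₁) =
            some (a, Stream'.Seq.corec stepF c)),
        Stream'.Seq.destruct_eq_cons (by rw [Stream'.Seq.corec_eq, h']; rfl :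
          Stream'.Seq.destruct (Stream'.Seq.corec stepF c₂) =
            some (a, Stream'.Seq.corec stepF c))]

theorem runT_congr {c₁ c₂ : List Stmt × State} (h2 : c₁.2 = c₂.2)
    (h : stepF c₁ = stepF c₂) : runT c₁ = runT c₂ := by
  unfold runT; rw [h2, corec_congr h]

theorem runT_nil_of (c : List Stmt × State) (h : stepF c = none) :
    runT c = Trace.single c.2 := by
  unfold runT Trace.single
  rw [Stream'.Seq.destruct_eq_none (s := Stream'.Seq.corec stepF c)
        (by rw [Stream'.Seq.corec_eq, h]; rfl)]

theorem runT_cons_of (c : List Stmt × State) (a : State) (c' : List Stmt × State)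
    (h : stepF c = some (a, c')) : runT c = Trace.cons c.2 (runT c') := by
  have ha : a = c'.2 := stepF_hd c a c' h
  unfold runT Trace.cons
  refine congrArg (Prod.mk c.2) ?_
  rw [← ha]
  exact Stream'.Seq.destruct_eq_cons (by rw [Stream'.Seq.corec_eq, h]; rfl)

/-- prepend a finite list of states to a trace -/
def consL : List State → Trace → Trace
  | [], τ => τ
  | σ :: l, τ => Trace.cons σ (consL l τ)

/-- The candidate evaluation relation. -/
noncomputable def Ecand (s : Stmt) (σ : State) (τ : Trace) : Prop :=
  τ = runT ([s], σ)

/-- The candidate extended evaluation relation. -/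
noncomputable def EScand (s : Stmt) (τ τ' : Trace) : Prop :=
  ∃ ps k σ₀, τ = consL ps (runT (k, σ₀)) ∧ τ' = consL ps (runT (k ++ [s], σ₀))

theorem EScand_of (s : Stmt) (k : List Stmt) (σ₀ : State) :
    EScand s (runT (k, σ₀)) (runT (k ++ [s], σ₀)) :=
  ⟨[], k, σ₀, rfl, rfl⟩

theorem cons_single_eq (σ : State) (s : Stmt) :
    Trace.cons σ (runT ([s], σ)) = consL [σ] (runT ([] ++ [s], σ)) := rfl

theorem consistent_cand : EvalConsistent Ecand EScand := by
  refine ⟨?_, ?_, ?_, ?_, ?_, ?_⟩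
  · -- assign
    rintro x e σ τ rfl
    rw [runT_cons_of _ (update σ x (e σ)) ([], update σ x (e σ)) (by rw [stepF]),
        runT_nil_of _ (by rw [stepF])]
  · -- skip
    rintro σ τ rfl
    rw [runT_nil_of _ (by rw [stepF, stepF])]
  · -- seq
    rintro s₀ s₁ σ τ' rfl
    refine ⟨runT ([s₀], σ), rfl, ?_⟩
    have : runT ([Stmt.seq s₀ s₁], σ) = runT ([s₀] ++ [s₁], σ) :=
      runT_congr rfl (by rw [stepF]; rfl)
    rw [this]
    exact EScand_of s₁ [s₀] σ
  · -- ifte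
    rintro e st sf σ τ rfl
    by_cases h : istrue e σ
    · left
      refine ⟨h, [σ], [], σ, ?_, ?_⟩
      · rw [consL, consL, runT_nil_of ([], σ) (by rw [stepF])]
      · rw [runT_cons_of ([Stmt.ifte e st sf], σ) σ ([st], σ) (by rw [stepF, if_pos h])]
        rfl
    · right
      refine ⟨h, [σ], [], σ, ?_, ?_⟩
      · rw [consL, consL, runT_nil_of ([], σ) (by rw [stepF])]
      · rw [runT_cons_of ([Stmt.ifte e st sf], σ) σ ([sf], σ) (by rw [stepF, if_neg h])]
        rfl
  · -- while
    rintro e st σ τ' rfl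
    by_cases h : istrue e σ
    · left
      refine ⟨h, Trace.cons σ (runT ([st], σ)), ⟨[σ], [], σ, ?_, rfl⟩, ?_⟩
      · rw [consL, consL, runT_nil_of ([], σ) (by rw [stepF])]
      · refine ⟨[σ], [st], σ, rfl, ?_⟩
        rw [runT_cons_of ([Stmt.whileDo e st], σ) σ ([st, Stmt.whileDo e st], σ)
          (by rw [stepF, if_pos h])]
        rfl
    · right
      refine ⟨h, ?_⟩
      rw [runT_cons_of ([Stmt.whileDo e st], σ) σ ([], σ) (by rw [stepF, if_neg h]),
          runT_nil_of ([], σ) (by rw [stepF])]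
  · -- ES
    rintro s τ τ' ⟨ps, k, σ₀, rfl, rfl⟩
    match ps with
    | σp :: ps =>
      right
      exact ⟨σp, consL ps (runT (k, σ₀)), consL ps (runT (k ++ [s], σ₀)), rfl, rfl,
        ps, k, σ₀, rfl, rfl⟩
    | [] =>
      rcases h : stepF (k, σ₀) with - | ⟨a, k₂, σ₂⟩
      · left
        refine ⟨σ₀, ?_, ?_⟩
        · exact runT_nil_of (k, σ₀) h
        · show consL [] (runT (k ++ [s], σ₀)) = runT ([s], σ₀)
          refine runT_congr rfl ?_
          rw [stepF_append, h]
      · right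
        have ha : a = σ₂ := stepF_hd _ _ _ h
        refine ⟨σ₀, runT (k₂, σ₂), runT (k₂ ++ [s], σ₂), ?_, ?_, ?_⟩
        · exact runT_cons_of (k, σ₀) a (k₂, σ₂) h
        · show consL [] (runT (k ++ [s], σ₀)) = Trace.cons σ₀ (runT (k₂ ++ [s], σ₂))
          have : stepF (k ++ [s], σ₀) = some (a, (k₂ ++ [s], σ₂)) := by
            rw [stepF_append, h]
          exact runT_cons_of (k ++ [s], σ₀) a (k₂ ++ [s], σ₂) this
        · exact ⟨[], k₂, σ₂, rfl, rfl⟩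

/-- Evaluation is total. -/
theorem exec_total (s : Stmt) (σ : State) : ∃ τ : Trace, Exec s σ τ :=
  ⟨runT ([s], σ), Ecand, EScand, consistent_cand, rfl⟩

end WhileTrace
end

section
/- For any state predicate U and traces τ and τ', if [U] follows τ in τ', then τ ≈ τ'. -/
namespace WhileTrace

/-- If `[U]` follows `τ` in `τ'`, then `τ ≈ τ'`. -/
theorem follows_sglt_bisim (U : StatePred) (τ τ' : Trace)
    (h : Follows (Sglt U) τ τ') : Bisim τ τ' := by
  obtain ⟨R, hR, hcons⟩ := h
  refine ⟨R, hR, fun a b hab => ?_⟩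
  rcases hcons a b hab with ⟨σ, ha, hhd, σ', hU, hb⟩ | ⟨σ, a', b', ha, hb, h'⟩
  · left
    subst hb
    simp [Trace.hd, Trace.single] at hhd
    exact ⟨σ, ha, by rw [hhd]⟩
  · right; exact ⟨σ, a', b', ha, hb, h'⟩

end WhileTrace
end

section
/- The chop operator is associative: for any setoid trace predicates P, Q and R, (P ** Q) ** R ⇔ P ** (Q ** R). -/
namespace WhileTrace

/-! ### Auxiliary lemmas for `chop_assoc` -/

private lemma trace_cons_inj {σ σ' : State} {a b : Trace}
    (h : Trace.cons σ a = Trace.cons σ' b) : σ = σ' ∧ a = b := by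
  have h1 : σ = σ' := congrArg Prod.fst h
  have h2 : Stream'.Seq.cons a.1 a.2 = Stream'.Seq.cons b.1 b.2 := congrArg Prod.snd h
  obtain ⟨e1, e2⟩ := Stream'.Seq.cons_injective2 h2
  exact ⟨h1, Prod.ext e1 e2⟩

private lemma trace_single_ne_cons {σ σ' : State} {a : Trace} :
    Trace.single σ ≠ Trace.cons σ' a := by
  intro h
  have h2 : (Stream'.Seq.nil : Stream'.Seq State) = Stream'.Seq.cons a.1 a.2 :=
    congrArg Prod.snd h
  have := congrArg (fun s => Stream'.Seq.get? s 0) h2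
  simp [Stream'.Seq.get?_cons_zero] at this

private lemma Follows.single' {Q : TracePred} {σ : State} {b : Trace}
    (h1 : b.hd = σ) (h2 : Q b) : Follows Q (Trace.single σ) b :=
  ⟨fun x y => x = Trace.single σ ∧ y = b, ⟨rfl, rfl⟩, by
    rintro x y ⟨rfl, rfl⟩; exact Or.inl ⟨σ, rfl, h1, h2⟩⟩

private lemma Follows.cons' {Q : TracePred} {σ : State} {a b : Trace}
    (h : Follows Q a b) : Follows Q (Trace.cons σ a) (Trace.cons σ b) := by
  obtain ⟨R, hR, hc⟩ := h
  refine ⟨fun x y => (x = Trace.cons σ a ∧ y = Trace.cons σ b) ∨ R x y,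
    Or.inl ⟨rfl, rfl⟩, ?_⟩
  rintro x y (⟨rfl, rfl⟩ | hxy)
  · exact Or.inr ⟨σ, a, b, rfl, rfl, Or.inr hR⟩
  · rcases hc x y hxy with h | ⟨σ', a', b', e1, e2, hr⟩
    · exact Or.inl h
    · exact Or.inr ⟨σ', a', b', e1, e2, Or.inr hr⟩

private lemma Follows.destruct {Q : TracePred} {a b : Trace} (h : Follows Q a b) :
    (∃ σ, a = Trace.single σ ∧ b.hd = σ ∧ Q b) ∨
    (∃ σ a' b', a = Trace.cons σ a' ∧ b = Trace.cons σ b' ∧ Follows Q a' b') := by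
  obtain ⟨R, hR, hc⟩ := h
  rcases hc a b hR with h | ⟨σ, a', b', e1, e2, hr⟩
  · exact Or.inl h
  · exact Or.inr ⟨σ, a', b', e1, e2, R, hr, hc⟩

private lemma follows_hd {Q : TracePred} {a b : Trace} (h : Follows Q a b) :
    b.1 = a.1 := by
  rcases h.destruct with ⟨σ, rfl, h1, _⟩ | ⟨σ, a', b', rfl, rfl, _⟩
  · exact h1
  · rfl

private lemma nonconv_dest {a : Trace} (h : ¬ ∃ σ, Converges a σ) :
    ∃ a', a = Trace.cons a.1 a' ∧ ¬ ∃ σ, Converges a' σ := by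
  have hnil : a.2 ≠ Stream'.Seq.nil := by
    intro e
    exact h ⟨a.1, by
      rw [show a = Trace.single a.1 from Prod.ext rfl e]; exact .single a.1⟩
  obtain ⟨⟨x, s⟩, hd⟩ := Option.ne_none_iff_exists'.mp
    (fun e => hnil (Stream'.Seq.destruct_eq_none e))
  have ha2 : a.2 = Stream'.Seq.cons x s := Stream'.Seq.destruct_eq_cons hd
  refine ⟨(x, s), Prod.ext rfl ha2, ?_⟩
  rintro ⟨σ, hc⟩
  exact h ⟨σ, by
    rw [show a = Trace.cons a.1 (x, s) from Prod.ext rfl ha2]; exact .cons a.1 hc⟩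

private lemma follows_refl_inf {Q : TracePred} {a : Trace}
    (h : ¬ ∃ σ, Converges a σ) : Follows Q a a := by
  refine ⟨fun x y => x = y ∧ ¬ ∃ σ, Converges x σ, ⟨rfl, h⟩, ?_⟩
  rintro x y ⟨rfl, hx⟩
  obtain ⟨a', e, ha'⟩ := nonconv_dest hx
  exact Or.inr ⟨x.1, a', a', e, e, rfl, ha'⟩

private lemma follows_inf_get {Q : TracePred} :
    ∀ (n : ℕ) {a b : Trace}, Follows Q a b → (¬ ∃ σ, Converges a σ) →
      a.2.get? n = b.2.get? n := by
  intro n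
  induction n with
  | zero =>
    intro a b h hn
    rcases h.destruct with ⟨σ, rfl, _, _⟩ | ⟨σ, a', b', rfl, rfl, hf⟩
    · exact absurd ⟨σ, .single σ⟩ hn
    · show (Stream'.Seq.cons a'.1 a'.2).get? 0 = (Stream'.Seq.cons b'.1 b'.2).get? 0
      rw [Stream'.Seq.get?_cons_zero, Stream'.Seq.get?_cons_zero, follows_hd hf]
  | succ n ih =>
    intro a b h hn
    rcases h.destruct with ⟨σ, rfl, _, _⟩ | ⟨σ, a', b', rfl, rfl, hf⟩
    · exact absurd ⟨σ, .single σ⟩ hn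
    · have hn' : ¬ ∃ σ, Converges a' σ := fun ⟨σ', hc⟩ => hn ⟨σ', .cons σ hc⟩
      show (Stream'.Seq.cons a'.1 a'.2).get? (n + 1)
          = (Stream'.Seq.cons b'.1 b'.2).get? (n + 1)
      rw [Stream'.Seq.get?_cons_succ, Stream'.Seq.get?_cons_succ]
      exact ih hf hn'

private lemma follows_inf_eq {Q : TracePred} {a b : Trace} (h : Follows Q a b)
    (hn : ¬ ∃ σ, Converges a σ) : a = b :=
  Prod.ext (follows_hd h).symm (Stream'.Seq.ext fun n => follows_inf_get n h hn)

private lemma follows_of_append {Q : TracePred} {τ'' : Trace} (hQ : Q τ'') :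
    ∀ {τ : Trace} {σ : State}, Converges τ σ → τ''.1 = σ →
      Follows Q τ (τ.1, τ.2.append τ''.2) := by
  intro τ σ hc
  induction hc with
  | single σ =>
    intro he
    have e : ((Trace.single σ).1, (Trace.single σ).2.append τ''.2) = τ'' := by
      refine Prod.ext he.symm ?_
      show Stream'.Seq.append Stream'.Seq.nil τ''.2 = τ''.2
      exact Stream'.Seq.nil_append _
    rw [e]
    exact Follows.single' he hQ
  | @cons σ' τ₀ σ hτ ih =>
    intro he
    have e : ((Trace.cons σ' τ₀).1, (Trace.cons σ' τ₀).2.append τ''.2)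
        = Trace.cons σ' (τ₀.1, τ₀.2.append τ''.2) := by
      refine Prod.ext rfl ?_
      show (Stream'.Seq.cons τ₀.1 τ₀.2).append τ''.2
          = Stream'.Seq.cons τ₀.1 (τ₀.2.append τ''.2)
      exact Stream'.Seq.cons_append _ _ _
    rw [e]
    exact Follows.cons' (ih he)

private lemma follows_append {R : TracePred} {τ₁ τ'' : Trace}
    (hF : Follows R τ₁ τ'') :
    ∀ {τ : Trace} {σ : State}, Converges τ σ → τ₁.1 = σ →
      Follows R (τ.1, τ.2.append τ₁.2) (τ.1, τ.2.append τ''.2) := by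
  intro τ σ hc
  induction hc with
  | single σ =>
    intro he
    have e1 : ((Trace.single σ).1, (Trace.single σ).2.append τ₁.2) = τ₁ := by
      refine Prod.ext he.symm ?_
      show Stream'.Seq.append Stream'.Seq.nil τ₁.2 = τ₁.2
      exact Stream'.Seq.nil_append _
    have e2 : ((Trace.single σ).1, (Trace.single σ).2.append τ''.2) = τ'' := by
      refine Prod.ext ((follows_hd hF).trans he).symm ?_
      show Stream'.Seq.append Stream'.Seq.nil τ''.2 = τ''.2
      exact Stream'.Seq.nil_append _
    rw [e1, e2]
    exact hF
  | @cons σ' τ₀ σ hτ ih =>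
    intro he
    have e1 : ((Trace.cons σ' τ₀).1, (Trace.cons σ' τ₀).2.append τ₁.2)
        = Trace.cons σ' (τ₀.1, τ₀.2.append τ₁.2) := by
      refine Prod.ext rfl ?_
      show (Stream'.Seq.cons τ₀.1 τ₀.2).append τ₁.2
          = Stream'.Seq.cons τ₀.1 (τ₀.2.append τ₁.2)
      exact Stream'.Seq.cons_append _ _ _
    have e2 : ((Trace.cons σ' τ₀).1, (Trace.cons σ' τ₀).2.append τ''.2)
        = Trace.cons σ' (τ₀.1, τ₀.2.append τ''.2) := by
      refine Prod.ext rfl ?_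
      show (Stream'.Seq.cons τ₀.1 τ₀.2).append τ''.2
          = Stream'.Seq.cons τ₀.1 (τ₀.2.append τ''.2)
      exact Stream'.Seq.cons_append _ _ _
    rw [e1, e2]
    exact Follows.cons' (ih he)

private lemma follows_finite_elim {Q : TracePred} :
    ∀ {τ : Trace} {σ : State}, Converges τ σ → ∀ {τ' : Trace}, Follows Q τ τ' →
      ∃ τ'', Q τ'' ∧ τ''.1 = σ ∧ τ' = (τ.1, τ.2.append τ''.2) := by
  intro τ σ hc
  induction hc with
  | single σ =>
    intro τ' h
    rcases h.destruct with ⟨σ₁, e, h1, h2⟩ | ⟨σ₁, a', b', e, _, _⟩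
    · have hσ : σ = σ₁ := congrArg Prod.fst e
      subst hσ
      refine ⟨τ', h2, h1, ?_⟩
      refine Prod.ext h1 ?_
      show τ'.2 = Stream'.Seq.append Stream'.Seq.nil τ'.2
      exact (Stream'.Seq.nil_append _).symm
    · exact absurd e trace_single_ne_cons
  | @cons σ' τ₀ σ hτ ih =>
    intro τ' h
    rcases h.destruct with ⟨σ₁, e, _, _⟩ | ⟨σ₁, a', b', e, e2, hf⟩
    · exact absurd e.symm trace_single_ne_cons
    · obtain ⟨h1', h2'⟩ := trace_cons_inj e
      subst h1'
      subst h2'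
      obtain ⟨τ'', hQ, hh, h2⟩ := ih hf
      refine ⟨τ'', hQ, hh, ?_⟩
      rw [e2, h2]
      refine Prod.ext rfl ?_
      show Stream'.Seq.cons τ₀.1 (τ₀.2.append τ''.2)
          = (Stream'.Seq.cons τ₀.1 τ₀.2).append τ''.2
      exact (Stream'.Seq.cons_append _ _ _).symm

/-- The chop operator is associative. -/
theorem chop_assoc (P Q R : TracePred)
    (hP : IsSetoidPred P) (hQ : IsSetoidPred Q) (hR : IsSetoidPred R) :
    ∀ τ : Trace, Chop (Chop P Q) R τ ↔ Chop P (Chop Q R) τ := by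
  intro τ'
  constructor
  · rintro ⟨τ, ⟨τ₀, hP0, hQF⟩, hRF⟩
    refine ⟨τ₀, hP0, ?_⟩
    refine ⟨fun a b => ∃ c, Follows Q a c ∧ Follows R c b, ⟨τ, hQF, hRF⟩, ?_⟩
    rintro a b ⟨c, hac, hcb⟩
    rcases hac.destruct with ⟨σ, rfl, h1, h2⟩ | ⟨σ, a', c', rfl, rfl, hf⟩
    · exact Or.inl ⟨σ, rfl, (follows_hd hcb).trans h1, c, h2, hcb⟩
    · rcases hcb.destruct with ⟨σ₁, e, _, _⟩ | ⟨σ₁, c₁, b', e, rfl, hf2⟩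
      · exact absurd e.symm trace_single_ne_cons
      · obtain ⟨h1', h2'⟩ := trace_cons_inj e
        subst h1'
        subst h2'
        exact Or.inr ⟨σ, a', b', rfl, rfl, c', hf, hf2⟩
  · rintro ⟨τ₀, hP0, hF⟩
    by_cases hc : ∃ σ, Converges τ₀ σ
    · obtain ⟨σ, hcv⟩ := hc
      obtain ⟨τ'', hQR, hhd, rfl⟩ := follows_finite_elim hcv hF
      obtain ⟨τ₁, hQ1, hR1⟩ := hQR
      have hτ1 : τ₁.1 = σ := (follows_hd hR1).symm.trans hhd
      exact ⟨(τ₀.1, τ₀.2.append τ₁.2), ⟨τ₀, hP0, follows_of_append hQ1 hcv hτ1⟩,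
        follows_append hR1 hcv hτ1⟩
    · have heq : τ₀ = τ' := follows_inf_eq hF hc
      subst heq
      exact ⟨τ₀, ⟨τ₀, hP0, follows_refl_inf hc⟩, follows_refl_inf hc⟩


end WhileTrace
end

section
/- A trace is infinite if and only if it satisfies True chopped with the singleton of the false state predicate: infinite ⇔ True ** [False]. -/
namespace WhileTrace

/-- `infinite ⇔ True ** [False]`. -/
theorem infinite_iff_chop_false :
    ∀ τ : Trace, InfiniteT τ ↔ Chop (fun _ => True) (Sglt (fun _ => False)) τ := by
  intro τ
  constructor
  · rintro ⟨P, hτ, hstep⟩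
    refine ⟨τ, trivial, fun a b => a = b ∧ P b, ⟨rfl, hτ⟩, ?_⟩
    rintro a b ⟨rfl, hPa⟩
    obtain ⟨σ, a', rfl, hPa'⟩ := hstep a hPa
    exact Or.inr ⟨σ, a', a', rfl, rfl, rfl, hPa'⟩
  · rintro ⟨τ₀, -, R, hR, hstep⟩
    refine ⟨fun b => ∃ a, R a b, ⟨τ₀, hR⟩, ?_⟩
    rintro b ⟨a, hab⟩
    rcases hstep a b hab with ⟨σ, -, -, σ', hF, -⟩ | ⟨σ, a', b', -, rfl, hR'⟩
    · exact absurd hF id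
    · exact ⟨σ, b', rfl, a', hR'⟩

end WhileTrace
end

section
/- For any state predicate U, While statement s and setoid trace predicate P, if ⊢{U} s {P} is derivable in the trace-based Hoare logic, then so is ⊢{U} s {[U] ** P}. -/
namespace WhileTrace

lemma follows_hd_s11 {Q : TracePred} {τ τ' : Trace} (h : Follows Q τ τ') :
    τ'.hd = τ.hd := by
  obtain ⟨R, hR, hstep⟩ := h
  rcases hstep _ _ hR with ⟨σ, ha, hb, _⟩ | ⟨σ, a', b', ha, hb, _⟩
  · subst ha; exact hb
  · subst ha; subst hb; rfl

lemma chop_strength {P P' Q : TracePred} {W : StatePred}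
    (h : ∀ τ, P τ → P' τ ∧ W τ.hd) :
    ∀ τ, Chop P Q τ → Chop P' Q τ ∧ W τ.hd := by
  rintro τ ⟨τ₀, hP, hF⟩
  obtain ⟨hP', hW⟩ := h τ₀ hP
  exact ⟨⟨τ₀, hP', hF⟩, by rw [follows_hd_s11 hF]; exact hW⟩

lemma chop_strength' {P Q : TracePred} {W : StatePred} :
    ∀ τ, Chop P Q τ ∧ W τ.hd → Chop (fun τ₀ => P τ₀ ∧ W τ₀.hd) Q τ := by
  rintro τ ⟨⟨τ₀, hP, hF⟩, hW⟩
  exact ⟨τ₀, ⟨hP, by rw [← follows_hd_s11 hF]; exact hW⟩, hF⟩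

lemma strengthen (W : StatePred) {U : StatePred} {s : Stmt} {P : TracePred}
    (h : THoare U s P) :
    THoare (fun σ => U σ ∧ W σ) s (fun τ => P τ ∧ W τ.hd) := by
  induction h with
  | assign U x e =>
      refine THoare.conseq (fun σ h => h)
        (THoare.assign (fun σ => U σ ∧ W σ) x e) ?_
      rintro τ ⟨σ, ⟨hU, hW⟩, rfl⟩
      exact ⟨⟨σ, hU, rfl⟩, hW⟩
  | skip U =>
      refine THoare.conseq (fun σ h => h) (THoare.skip _) ?_
      rintro τ ⟨σ, ⟨hU, hW⟩, rfl⟩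
      exact ⟨⟨σ, hU, rfl⟩, hW⟩
  | seq h0 h1 ih0 ih1 =>
      refine THoare.conseq (fun σ h => h)
        (THoare.seq (THoare.conseq (fun σ h => h) ih0 chop_strength') h1) ?_
      exact chop_strength (fun τ h => h)
  | ifte ht hf iht ihf =>
      refine THoare.conseq (fun σ h => h)
        (THoare.ifte
          (THoare.conseq (fun σ h => ⟨h.1, h.2.1⟩) ht (fun _ h => h))
          (THoare.conseq (fun σ h => ⟨h.1, h.2.1⟩) hf (fun _ h => h))) ?_
      refine chop_strength ?_
      rintro τ ⟨σ, ⟨hU, hW⟩, rfl⟩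
      exact ⟨⟨σ, hU, rfl⟩, hW⟩
  | whileDo hUI hbody ih =>
      refine THoare.conseq (fun σ h => h)
        (THoare.whileDo (fun σ h => hUI σ h.1) hbody) ?_
      refine chop_strength ?_
      rintro τ ⟨σ, ⟨hU, hW⟩, rfl⟩
      exact ⟨⟨σ, hU, rfl⟩, hW⟩
  | conseq hUU' h' hP'P ih =>
      exact THoare.conseq (fun σ h => ⟨hUU' σ h.1, h.2⟩) ih
        (fun τ h => ⟨hP'P τ h.1, h.2⟩)
  | exist hz ihz =>
      refine THoare.conseq (fun σ h => ?_) (THoare.exist fun z => ihz z)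
        (fun τ h => ?_)
      · obtain ⟨⟨z, hU⟩, hW⟩ := h; exact ⟨z, hU, hW⟩
      · obtain ⟨z, hP, hW⟩ := h; exact ⟨⟨z, hP⟩, hW⟩

/-- If `⊢{U} s {P}` then `⊢{U} s {[U] ** P}`. -/
theorem tHoare_hd (U : StatePred) (s : Stmt) (P : TracePred)
    (hP : IsSetoidPred P) (h : THoare U s P) : THoare U s (Chop (Sglt U) P) := by
  refine THoare.conseq (fun σ hU => ⟨hU, hU⟩) (strengthen U h) ?_
  rintro τ ⟨hPτ, hUhd⟩
  refine ⟨Trace.single τ.hd, ⟨τ.hd, hUhd, rfl⟩, ?_⟩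
  refine ⟨fun a b => a = Trace.single τ.hd ∧ b = τ, ⟨rfl, rfl⟩, ?_⟩
  rintro a b ⟨rfl, rfl⟩
  exact Or.inl ⟨_, rfl, rfl, hPτ⟩

end WhileTrace
end
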